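/- For every positive integer n with g_n² > b_n, one has g_n - ω_n = b_n/(g_n + ω_n) ≤ 2/ε + λ²/(4 ε q_λ), where ω_n = √(g_n² - b_n), q_λ = (α + ελ²/4 + ε(π/l)²)/2. -/
import Mathlib


open Real

theorem g_sub_omega_bound (l lam alpha eps : ℝ) (hl : 0 < l) (hlam : 0 < lam)
    (halpha : 0 < alpha) (heps : 0 < eps) (n : ℕ) (hn : 0 < n)
    (γ b g ω q : ℝ)
    (hγ : γ = n * π / l) (hb : b = γ ^ 2 + lam ^ 2 / 4)
    (hg : g = (alpha + eps * b) / 2) (hlt : b < g ^ 2)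
    (hω : ω = Real.sqrt (g ^ 2 - b))
    (hq : q = (alpha + eps * lam ^ 2 / 4 + eps * (π / l) ^ 2) / 2) :
    g - ω = b / (g + ω) ∧ b / (g + ω) ≤ 2 / eps + lam ^ 2 / (4 * eps * q) := by
  have hbpos : 0 < b := by
    have : 0 ≤ γ ^ 2 := sq_nonneg γ
    nlinarith [sq_nonneg lam]
  have hgpos : 0 < g := by
    rw [hg]; positivity
  have hωnn : 0 ≤ ω := hω ▸ Real.sqrt_nonneg _
  have hωsq : ω ^ 2 = g ^ 2 - b := by
    rw [hω, sq_sqrt (by linarith)]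
  have hsum : 0 < g + ω := by linarith
  have heq : g - ω = b / (g + ω) := by
    rw [eq_div_iff (ne_of_gt hsum)]; nlinarith
  refine ⟨heq, ?_⟩
  have hqpos : 0 < q := by
    rw [hq]; positivity
  have h1 : b / (g + ω) ≤ b / g :=
    div_le_div_of_nonneg_left (le_of_lt hbpos) hgpos (by linarith)
  have h2 : b / g ≤ 2 / eps := by
    rw [div_le_div_iff₀ hgpos heps, hg]; nlinarith
  have h3 : 0 ≤ lam ^ 2 / (4 * eps * q) := by positivity
  linarith
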